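/- arXiv:1001.3424 — 2 statements merged into one kernel-verified Lean document; each statement's English description precedes it below -/
import Mathlib

section
/- Let G be a group, H a normal subgroup of G, k a field, and W a finite-dimensional k-vector space with a linear representation ρ : G → GL(W). If W is semisimple as a G-module, then W is semisimple as an H-module (via restriction of ρ). -/
namespace CliffordAux

open MonoidAlgebra

variable {k : Type*} [Field k] {Γ : Type*} [Group Γ]
variable {W : Type*} [AddCommGroup W] [Module k W]

/-- From a `Γ`-invariant `k`-submodule, a submodule of `τ.asModule`. -/
def toInvt (τ : Representation k Γ W) (p : Submodule k W)
    (hp : ∀ g : Γ, ∀ x ∈ p, τ g x ∈ p) : Submodule (MonoidAlgebra k Γ) τ.asModule where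
  carrier := p.carrier
  add_mem' := fun ha hb => p.add_mem ha hb
  zero_mem' := p.zero_mem
  smul_mem' := fun r x hx => by
    change τ.asAlgebraHom r x ∈ p
    induction r using MonoidAlgebra.induction_on with
    | of g => rw [τ.asAlgebraHom_of]; exact hp g x hx
    | add f g hf hg => rw [map_add]; exact p.add_mem hf hg
    | smul c f hf => rw [map_smul]; exact p.smul_mem c hf

lemma mem_toInvt (τ : Representation k Γ W) (p : Submodule k W)
    (hp : ∀ g : Γ, ∀ x ∈ p, τ g x ∈ p) (x : W) : x ∈ toInvt τ p hp ↔ x ∈ p := Iff.rfl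

/-- The underlying `k`-submodule of a submodule of `τ.asModule`. -/
def ofInvt (τ : Representation k Γ W) (q : Submodule (MonoidAlgebra k Γ) τ.asModule) :
    Submodule k W where
  carrier := q.carrier
  add_mem' := fun ha hb => q.add_mem ha hb
  zero_mem' := q.zero_mem
  smul_mem' := fun c x hx => by
    have h : (algebraMap k (MonoidAlgebra k Γ) c) • (show τ.asModule from x) ∈ q :=
      q.smul_mem _ hx
    have e : (algebraMap k (MonoidAlgebra k Γ) c) • (show τ.asModule from x) = c • x := by
      change τ.asAlgebraHom (algebraMap k _ c) x = c • x
      rw [AlgHom.commutes]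
      simp [Module.algebraMap_end_apply]
    rwa [e] at h

lemma mem_ofInvt (τ : Representation k Γ W) (q : Submodule (MonoidAlgebra k Γ) τ.asModule)
    (x : W) : x ∈ ofInvt τ q ↔ x ∈ q := Iff.rfl

lemma ofInvt_invt (τ : Representation k Γ W) (q : Submodule (MonoidAlgebra k Γ) τ.asModule) :
    ∀ g : Γ, ∀ x ∈ ofInvt τ q, τ g x ∈ ofInvt τ q := by
  intro g x hx
  have h : (MonoidAlgebra.of k Γ g) • (show τ.asModule from x) ∈ q := q.smul_mem _ hx
  have e : (MonoidAlgebra.of k Γ g) • (show τ.asModule from x) = τ g x := by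
    change τ.asAlgebraHom (of k Γ g) x = τ g x
    rw [τ.asAlgebraHom_of]
  rw [mem_ofInvt, ← e]
  exact h

lemma ofInvt_strictMono (τ : Representation k Γ W) : StrictMono (ofInvt τ) := by
  intro q q' h
  rw [SetLike.lt_iff_le_and_exists] at h ⊢
  refine ⟨fun x hx => h.1 hx, ?_⟩
  obtain ⟨x, hx, hx'⟩ := h.2
  exact ⟨x, hx, hx'⟩

lemma rho_comp (τ : Representation k Γ W) (a b : Γ) (x : W) :
    τ a (τ b x) = τ (a * b) x := by rw [map_mul]; rfl

lemma rho_inv_self (τ : Representation k Γ W) (g : Γ) (x : W) : τ g⁻¹ (τ g x) = x := by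
  rw [rho_comp, inv_mul_cancel, map_one, Module.End.one_apply]

lemma rho_self_inv (τ : Representation k Γ W) (g : Γ) (x : W) : τ g (τ g⁻¹ x) = x := by
  rw [rho_comp, mul_inv_cancel, map_one, Module.End.one_apply]

end CliffordAux

open CliffordAux MonoidAlgebra

section Conj

variable {k : Type*} [Field k] {G : Type*} [Group G] {H : Subgroup G} [H.Normal]
variable {W : Type*} [AddCommGroup W] [Module k W]
variable (ρ : Representation k G W)

/-- Translate of an `H`-submodule by `ρ g`. -/
noncomputable def cmap (g : G)
    (q : Submodule (MonoidAlgebra k H)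
      (Representation.asModule (V := W) (ρ.comp H.subtype : Representation k H W))) :
    Submodule (MonoidAlgebra k H)
      (Representation.asModule (V := W) (ρ.comp H.subtype : Representation k H W)) :=
  toInvt _ ((ofInvt _ q).map (ρ g)) (by
    intro h x hx
    obtain ⟨y, hy, rfl⟩ := Submodule.mem_map.1 hx
    rw [Submodule.mem_map]
    refine ⟨ρ (g⁻¹ * (h : G) * g) y, ofInvt_invt _ q ⟨g⁻¹ * (h : G) * g, by
      simpa [inv_inv] using (‹H.Normal›.conj_mem (h : G) h.2 g⁻¹)⟩ y hy, ?_⟩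
    show ρ g (ρ (g⁻¹ * (h : G) * g) y) = ρ (h : G) (ρ g y)
    rw [rho_comp, rho_comp]
    group)

lemma mem_cmap (g : G)
    (q : Submodule (MonoidAlgebra k H)
      (Representation.asModule (V := W) (ρ.comp H.subtype : Representation k H W)))
    (x : W) : x ∈ cmap ρ g q ↔ ρ g⁻¹ x ∈ q := by
  rw [show (x ∈ cmap ρ g q) = (x ∈ (ofInvt _ q).map (ρ g)) from rfl, Submodule.mem_map]
  constructor
  · rintro ⟨y, hy, rfl⟩
    have e : ρ g⁻¹ (ρ g y) = y := rho_inv_self ρ g y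
    exact e.symm ▸ hy
  · intro h
    exact ⟨ρ g⁻¹ x, h, rho_self_inv ρ g x⟩

lemma cmap_inv_cancel (g : G)
    (q : Submodule (MonoidAlgebra k H)
      (Representation.asModule (V := W) (ρ.comp H.subtype : Representation k H W))) :
    cmap ρ g⁻¹ (cmap ρ g q) = q := by
  ext x
  refine (mem_cmap ρ g⁻¹ (cmap ρ g q) x).trans ((mem_cmap ρ g q _).trans ?_)
  have e : ρ g⁻¹ (ρ g⁻¹⁻¹ x) = x := rho_self_inv ρ g⁻¹ x
  exact ⟨fun h => e ▸ h, fun h => e.symm ▸ h⟩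

lemma cmap_bot (g : G) :
    cmap ρ g (⊥ : Submodule (MonoidAlgebra k H)
      (Representation.asModule (V := W) (ρ.comp H.subtype : Representation k H W))) = ⊥ := by
  ext x
  refine (mem_cmap ρ g ⊥ x).trans ?_
  simp only [Submodule.mem_bot]
  constructor
  · intro h
    have h2 := congrArg (ρ g) h
    exact (rho_self_inv ρ g x).symm.trans (h2.trans (map_zero (ρ g)))
  · rintro rfl
    exact map_zero (ρ g⁻¹)

lemma cmap_mono (g : G)
    {q q' : Submodule (MonoidAlgebra k H)
      (Representation.asModule (V := W) (ρ.comp H.subtype : Representation k H W))}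
    (h : q ≤ q') : cmap ρ g q ≤ cmap ρ g q' := by
  intro x hx
  exact (mem_cmap ρ g q' x).2 (h ((mem_cmap ρ g q x).1 hx))

lemma cmap_atom (g : G)
    {q : Submodule (MonoidAlgebra k H)
      (Representation.asModule (V := W) (ρ.comp H.subtype : Representation k H W))}
    (hq : IsAtom q) : IsAtom (cmap ρ g q) := by
  constructor
  · intro hbot
    apply hq.1
    have := congrArg (cmap ρ g⁻¹) hbot
    rwa [cmap_inv_cancel, cmap_bot] at this
  · intro p hp
    have h1 : cmap ρ g⁻¹ p ≤ q := by
      have := cmap_mono ρ g⁻¹ hp.le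
      rwa [cmap_inv_cancel] at this
    have h2 : cmap ρ g⁻¹ p ≠ q := by
      intro he
      have := congrArg (cmap ρ g⁻¹⁻¹) he
      rw [cmap_inv_cancel, inv_inv] at this
      exact hp.ne this
    have h3 : cmap ρ g⁻¹ p = ⊥ := hq.2 _ (lt_of_le_of_ne h1 h2)
    have := congrArg (cmap ρ g⁻¹⁻¹) h3
    rwa [cmap_inv_cancel, inv_inv, cmap_bot] at this

end Conj

/-- Clifford's lemma: if `W` is a semisimple representation of `G` over a field `k`
(finite-dimensional), and `H` is a normal subgroup of `G`, then `W` is semisimple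
as a representation of `H` (via restriction). -/
theorem clifford_semisimple_restriction
    (k : Type*) [Field k] (G : Type*) [Group G] (H : Subgroup G) [H.Normal]
    (W : Type*) [AddCommGroup W] [Module k W] [FiniteDimensional k W]
    (ρ : Representation k G W)
    (hss : IsSemisimpleModule (MonoidAlgebra k G) ρ.asModule) :
    IsSemisimpleModule (MonoidAlgebra k H) (Representation.asModule (V := W) (ρ.comp H.subtype : Representation k H W)) := by
  set σ : Representation k H W := (ρ.comp H.subtype : Representation k H W) with hσdef
  have hwf : WellFoundedLT (Submodule (MonoidAlgebra k H)
      (Representation.asModule (V := W) σ)) :=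
    (ofInvt_strictMono σ).wellFoundedLT
  have hatomic : IsAtomic (Submodule (MonoidAlgebra k H)
      (Representation.asModule (V := W) σ)) :=
    isAtomic_of_orderBot_wellFounded_lt hwf.wf
  set S : Submodule (MonoidAlgebra k H) (Representation.asModule (V := W) σ) :=
    sSup {q | IsAtom q} with hS
  -- S is G-invariant
  have hSinv : ∀ g : G, ∀ x ∈ ofInvt σ S, ρ g x ∈ ofInvt σ S := by
    intro g x hx
    have hTinv : ∀ h : H, ∀ y ∈ (ofInvt σ S).comap (ρ g), σ h y ∈ (ofInvt σ S).comap (ρ g) := by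
      intro h y hy
      simp only [Submodule.mem_comap] at hy ⊢
      have e : ρ g (σ h y) = σ ⟨g * (h : G) * g⁻¹, ‹H.Normal›.conj_mem (h : G) h.2 g⟩ (ρ g y) := by
        show ρ g (ρ (h : G) y) = ρ (g * (h : G) * g⁻¹) (ρ g y)
        rw [rho_comp, rho_comp]
        group
      rw [e]
      exact ofInvt_invt σ S _ _ hy
    have hST : S ≤ toInvt σ ((ofInvt σ S).comap (ρ g)) hTinv := by
      refine sSup_le fun q hq y hy => ?_
      refine (mem_toInvt σ _ hTinv y).2 (Submodule.mem_comap.2 ?_)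
      have h1 : ρ g y ∈ cmap ρ g q := by
        refine (mem_cmap ρ g q _).2 ?_
        have e : ρ g⁻¹ (ρ g y) = y := rho_inv_self ρ g y
        exact e.symm ▸ hy
      have h2 : cmap ρ g q ≤ S := le_sSup (cmap_atom ρ g hq)
      exact h2 h1
    have := hST hx
    replace this := Submodule.mem_comap.1 ((mem_toInvt σ _ hTinv x).1 this)
    exact this
  -- lift S to a G-submodule
  set T' : Submodule (MonoidAlgebra k G) ρ.asModule := toInvt ρ (ofInvt σ S) hSinv with hT'
  obtain ⟨C, hC⟩ := exists_isCompl T'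
  have hCbot : C = ⊥ := by
    by_contra hne
    -- C is H-invariant
    have hCinv : ∀ h : H, ∀ x ∈ ofInvt ρ C, σ h x ∈ ofInvt ρ C := by
      intro h x hx
      exact ofInvt_invt ρ C (h : G) x hx
    set CH : Submodule (MonoidAlgebra k H) (Representation.asModule (V := W) σ) :=
      toInvt σ (ofInvt ρ C) hCinv with hCH
    have hCHne : CH ≠ ⊥ := by
      intro hb
      apply hne
      rw [Submodule.eq_bot_iff] at hb ⊢
      intro x hx
      exact hb x hx
    obtain ⟨q, hq, hqle⟩ := (hatomic.eq_bot_or_exists_atom_le CH).resolve_left hCHne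
    obtain ⟨y, hy, hyne⟩ := Submodule.exists_mem_ne_zero_of_ne_bot hq.1
    have hyS : y ∈ S := le_sSup (show q ∈ {q | IsAtom q} from hq) hy
    have hyT' : y ∈ T' := hyS
    have hyC : y ∈ C := hqle hy
    have hmem : y ∈ T' ⊓ C := ⟨hyT', hyC⟩
    rw [hC.inf_eq_bot] at hmem
    exact hyne hmem
  have hT'top : T' = ⊤ := by
    have := hC.sup_eq_top
    rwa [hCbot, sup_bot_eq] at this
  have hStop : S = ⊤ := by
    rw [Submodule.eq_top_iff']
    intro x
    have hx : (show Representation.asModule (V := W) ρ from x) ∈ T' := by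
      rw [hT'top]
      exact Submodule.mem_top
    exact hx
  apply IsSemisimpleModule.of_sSup_simples_eq_top
  have he : {m : Submodule (MonoidAlgebra k H) (Representation.asModule (V := W) σ) |
      IsSimpleModule (MonoidAlgebra k H) m} = {q | IsAtom q} := by
    ext q; exact isSimpleModule_iff_isAtom
  rw [he]
  exact hStop
end

section
/- Let G be a group, H ⊴ G a normal subgroup, k a field, and W a finite-dimensional k[G]-module that is simple. Then W, viewed as a k[H]-module by restriction, is semisimple. -/
open MonoidAlgebra

section CliffordAux

variable {k : Type*} [Field k] {N : Type*} [Group N]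
  {W : Type*} [AddCommGroup W] [Module k W]

private theorem rep_smul_def (τ : Representation k N W) (b : MonoidAlgebra k N)
    (x : τ.asModule) : b • x = τ.asAlgebraHom b x := rfl

private theorem rep_algebraMap_smul (τ : Representation k N W) (r : k)
    (x : τ.asModule) : (algebraMap k (MonoidAlgebra k N) r) • x = r • x := by
  rw [rep_smul_def, AlgHom.commutes]
  exact Module.algebraMap_end_apply k k W r x

private theorem rep_of_smul (τ : Representation k N W) (n : N) (x : τ.asModule) :
    MonoidAlgebra.of k N n • x = τ n x := by
  rw [rep_smul_def, Representation.asAlgebraHom_of]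

end CliffordAux

section Clifford

variable {k : Type*} [Field k] {G : Type*} [Group G] (H : Subgroup G) [hN : H.Normal]
  {W : Type*} [AddCommGroup W] [Module k W] (ρ : Representation k G W)

/-- Conjugate of an `H`-submodule by `g : G`. -/
private noncomputable def cliffConj (g : G)
    (S : Submodule (MonoidAlgebra k H) (Representation.asModule (ρ.comp H.subtype : Representation k H W))) :
    Submodule (MonoidAlgebra k H) (Representation.asModule (ρ.comp H.subtype : Representation k H W)) where
  carrier := ρ g '' (S : Set ((Representation.asModule (ρ.comp H.subtype : Representation k H W))))
  add_mem' := by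
    rintro a b ⟨x, hx, rfl⟩ ⟨y, hy, rfl⟩
    exact ⟨x + y, S.add_mem hx hy, map_add _ _ _⟩
  zero_mem' := ⟨0, S.zero_mem, map_zero _⟩
  smul_mem' := by
    intro c x hx
    induction c using MonoidAlgebra.induction_on with
    | of h =>
      obtain ⟨y, hy, rfl⟩ := hx
      erw [rep_of_smul]
      have hmem : (g⁻¹ * ↑h * g) ∈ H := by
        have := hN.conj_mem ↑h h.2 g⁻¹
        rwa [inv_inv] at this
      refine ⟨(ρ.comp H.subtype) ⟨g⁻¹ * ↑h * g, hmem⟩ y, ?_, ?_⟩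
      · have h2 := S.smul_mem (MonoidAlgebra.of k H (⟨g⁻¹ * ↑h * g, hmem⟩ : H)) hy
        erw [rep_of_smul] at h2
        exact h2
      · show ρ g (ρ (g⁻¹ * ↑h * g) y) = (ρ.comp H.subtype) h (ρ g y)
        rw [← Module.End.mul_apply, ← map_mul]
        show _ = ρ (↑h) (ρ g y)
        rw [← Module.End.mul_apply, ← map_mul]
        congr 1
        group
    | add f1 f2 h1 h2 =>
      obtain ⟨a, ha, hea⟩ := h1
      obtain ⟨b, hb, heb⟩ := h2
      refine ⟨a + b, S.add_mem ha hb, ?_⟩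
      rw [map_add, hea, heb, rep_smul_def, rep_smul_def, rep_smul_def, map_add]
      rfl
    | smul r f hf =>
      obtain ⟨a, ha, hea⟩ := hf
      refine ⟨r • a, ?_, ?_⟩
      · have h2 := S.smul_mem (algebraMap k (MonoidAlgebra k H) r) ha
        exact S.smul_of_tower_mem r ha
      · rw [map_smul, hea, rep_smul_def, rep_smul_def, map_smul]
        rfl

private theorem mem_cliffConj {g : G}
    {S : Submodule (MonoidAlgebra k H) (Representation.asModule (ρ.comp H.subtype : Representation k H W))}
    {x : (Representation.asModule (ρ.comp H.subtype : Representation k H W))} :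
    x ∈ cliffConj H ρ g S ↔ ∃ y ∈ S, ρ g y = x := Iff.rfl

private theorem cliffConj_mono (g : G)
    {S S' : Submodule (MonoidAlgebra k H) (Representation.asModule (ρ.comp H.subtype : Representation k H W))} (h : S ≤ S') :
    cliffConj H ρ g S ≤ cliffConj H ρ g S' := by
  rintro x ⟨y, hy, rfl⟩
  exact ⟨y, h hy, rfl⟩

private theorem cliffConj_conj (a b : G)
    (S : Submodule (MonoidAlgebra k H) (Representation.asModule (ρ.comp H.subtype : Representation k H W))) :
    cliffConj H ρ a (cliffConj H ρ b S) = cliffConj H ρ (a * b) S := by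
  ext x
  simp only [mem_cliffConj]
  constructor
  · rintro ⟨y, ⟨z, hz, rfl⟩, rfl⟩
    exact ⟨z, hz, by rw [map_mul]; rfl⟩
  · rintro ⟨z, hz, rfl⟩
    exact ⟨ρ b z, ⟨z, hz, rfl⟩, by rw [map_mul]; rfl⟩

private theorem cliffConj_one
    (S : Submodule (MonoidAlgebra k H) (Representation.asModule (ρ.comp H.subtype : Representation k H W))) :
    cliffConj H ρ 1 S = S := by
  ext x
  simp only [mem_cliffConj]
  constructor
  · rintro ⟨y, hy, rfl⟩
    rw [map_one]
    exact hy
  · intro hx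
    exact ⟨x, hx, by rw [map_one]; rfl⟩

/-- Conjugation by `g` as an order isomorphism of the lattice of `H`-submodules. -/
private noncomputable def cliffConjEquiv (g : G) :
    Submodule (MonoidAlgebra k H) (Representation.asModule (ρ.comp H.subtype : Representation k H W)) ≃o
      Submodule (MonoidAlgebra k H) (Representation.asModule (ρ.comp H.subtype : Representation k H W)) where
  toFun := cliffConj H ρ g
  invFun := cliffConj H ρ g⁻¹
  left_inv := fun S => by rw [cliffConj_conj, inv_mul_cancel, cliffConj_one]
  right_inv := fun S => by rw [cliffConj_conj, mul_inv_cancel, cliffConj_one]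
  map_rel_iff' := by
    intro S S'
    show cliffConj H ρ g S ≤ cliffConj H ρ g S' ↔ S ≤ S'
    constructor
    · intro hle
      have := cliffConj_mono H ρ g⁻¹ hle
      simpa only [cliffConj_conj, inv_mul_cancel, cliffConj_one] using this
    · exact cliffConj_mono H ρ g

end Clifford

/-- Clifford's theorem: if `W` is a simple (irreducible) finite-dimensional
representation of `G` over a field `k`, and `H` is a normal subgroup of `G`,
then `W` is semisimple as a representation of `H` (via restriction). -/
theorem clifford_simple_restriction_semisimple
    (k : Type*) [Field k] (G : Type*) [Group G] (H : Subgroup G) [H.Normal]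
    (W : Type*) [AddCommGroup W] [Module k W] [FiniteDimensional k W]
    (ρ : Representation k G W)
    (hsimple : IsSimpleModule (MonoidAlgebra k G) ρ.asModule) :
    IsSemisimpleModule (MonoidAlgebra k H) (Representation.asModule (V := W) (ρ.comp H.subtype : Representation k H W)) := by
  classical
  set B := MonoidAlgebra k H with hB
  set τ : Representation k H W := ρ.comp H.subtype with hτ
  haveI htower : IsScalarTower k B τ.asModule := ⟨fun r b x => by
    rw [rep_smul_def, rep_smul_def, map_smul]
    rfl⟩
  haveI hart_k : IsArtinian k τ.asModule := inferInstanceAs (IsArtinian k W)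
  haveI hart : IsArtinian B τ.asModule := isArtinian_of_tower k hart_k
  haveI hatomic : IsAtomic (Submodule B τ.asModule) :=
    isAtomic_of_orderBot_wellFounded_lt hart.wf
  apply IsSemisimpleModule.of_sSup_simples_eq_top
  simp_rw [isSimpleModule_iff_isAtom]
  set T : Submodule B τ.asModule := sSup {m : Submodule B τ.asModule | IsAtom m} with hT
  -- stability of T under the G-action
  have hstab : ∀ (g : G) (x : τ.asModule), x ∈ T → ρ g x ∈ T := by
    intro g x hx
    have h1 : cliffConj H ρ g T ≤ T := by
      show (cliffConjEquiv H ρ g) T ≤ T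
      rw [hT, OrderIso.map_sSup]
      apply iSup_le
      intro S
      apply iSup_le
      intro hS
      exact le_sSup (((cliffConjEquiv H ρ g).isAtom_iff S).2 hS)
    exact h1 ((mem_cliffConj H ρ).2 ⟨x, hx, rfl⟩)
  -- nontriviality
  haveI hnt1 : Nontrivial ρ.asModule := IsSimpleModule.nontrivial (MonoidAlgebra k G) ρ.asModule
  haveI hnt : Nontrivial τ.asModule := hnt1
  -- T is nonzero
  obtain ⟨a, haAtom, -⟩ := (eq_bot_or_exists_atom_le (⊤ : Submodule B τ.asModule)).resolve_left
    (by
      intro h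
      obtain ⟨x, hx⟩ := exists_ne (0 : τ.asModule)
      exact hx ((Submodule.mem_bot B).1 (h ▸ Submodule.mem_top)))
  have hTne : T ≠ ⊥ := fun hbot => haAtom.1 (le_bot_iff.1 (hbot ▸ le_sSup haAtom))
  -- the G-submodule with the same carrier as T
  let TA : Submodule (MonoidAlgebra k G) ρ.asModule :=
  { carrier := (T : Set τ.asModule)
    add_mem' := fun ha hb => T.add_mem ha hb
    zero_mem' := T.zero_mem
    smul_mem' := by
      intro c x hx
      induction c using MonoidAlgebra.induction_on with
      | of g =>
        rw [rep_of_smul]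
        exact hstab g x hx
      | add f1 f2 h1 h2 =>
        rw [rep_smul_def, map_add]
        exact T.add_mem h1 h2
      | smul r f hf =>
        rw [rep_smul_def, map_smul]
        have h2 := T.smul_mem (algebraMap k B r) hf
        erw [rep_algebraMap_smul] at h2
        exact h2 }
  rcases eq_bot_or_eq_top TA with hbot | htop
  · exfalso
    apply hTne
    apply le_bot_iff.1
    intro x hx
    have hx' : x ∈ TA := hx
    rw [hbot] at hx'
    exact (Submodule.mem_bot _).2 ((Submodule.mem_bot (M := ρ.asModule) (MonoidAlgebra k G)).1 hx')
  · apply eq_top_iff.2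
    intro x _
    have : x ∈ TA := by rw [htop]; trivial
    exact this
end
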